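/- Let Γ be a group admitting a surjective group homomorphism onto a non-abelian free group, i.e. onto FreeGroup ι for some type ι having at least two distinct elements. Then for every finite group A there exists a subgroup M of Γ of finite index such that N_Γ(M)/M is isomorphic to A. -/

import Mathlib

namespace FarpAux

variable {A : Type*} [Group A]

/-- The marker function: positions `0..n-1` enumerate `A`, position `n` repeats `c 0`. -/
def cFun {n : ℕ} (hn : 2 ≤ n) (eA : Fin n ≃ A) (i : ZMod (n+1)) : A :=
  if h : i.val < n then eA ⟨i.val, h⟩ else eA ⟨0, by omega⟩

lemma cFun_key1 {n : ℕ} (hn : 2 ≤ n) (eA : Fin n ≃ A) (s t : ZMod (n+1))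
    (hst : cFun hn eA s = cFun hn eA t) :
    s = t ∨ (s = 0 ∧ t = (n : ZMod (n+1))) ∨ (s = (n : ZMod (n+1)) ∧ t = 0) := by
  have hs := ZMod.val_lt s
  have ht := ZMod.val_lt t
  have hvn : ((n : ZMod (n+1))).val = n := ZMod.val_cast_of_lt (by omega)
  have hv0 : ((0 : ZMod (n+1))).val = 0 := ZMod.val_zero
  by_cases h1 : s.val < n <;> by_cases h2 : t.val < n <;>
    simp only [cFun, dif_pos, dif_neg, h1, h2, dite_true, dite_false,
      EmbeddingLike.apply_eq_iff_eq, Fin.mk.injEq] at hst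
  · exact Or.inl (ZMod.val_injective _ hst)
  · refine Or.inr (Or.inl ⟨?_, ?_⟩)
    · exact ZMod.val_injective _ (by rw [hst, hv0])
    · exact ZMod.val_injective _ (by rw [hvn]; omega)
  · refine Or.inr (Or.inr ⟨?_, ?_⟩)
    · exact ZMod.val_injective _ (by rw [hvn]; omega)
    · exact ZMod.val_injective _ (by rw [← hst, hv0])
  · exact Or.inl (ZMod.val_injective _ (by omega))

lemma cFun_key2 {n : ℕ} (hn : 2 ≤ n) (eA : Fin n ≃ A) (j : ZMod (n+1)) (hj : j ≠ 0) :
    cFun hn eA (j + (n : ZMod (n+1))) ≠ cFun hn eA j := by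
  intro hc
  have hvn : ((n : ZMod (n+1))).val = n := ZMod.val_cast_of_lt (by omega)
  rcases cFun_key1 hn eA _ _ hc with h | ⟨h1, h2⟩ | ⟨h1, h2⟩
  · have hn0 : (n : ZMod (n+1)) = 0 := by
      have := add_eq_left.mp h
      exact this
    rw [hn0] at hvn
    simp [ZMod.val_zero] at hvn
    omega
  · -- j + n = 0 and j = n : then n + n = 0 in ZMod (n+1)
    rw [h2] at h1
    have : ((n + n : ℕ) : ZMod (n+1)) = 0 := by push_cast; exact h1
    have hval := congrArg ZMod.val this
    rw [ZMod.val_natCast, ZMod.val_zero] at hval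
    have h4 : (n + n) % (n + 1) = n - 1 := by
      rw [Nat.mod_eq_sub_mod (by omega), Nat.mod_eq_of_lt (by omega)]
      omega
    omega
  · exact hj h2

lemma cFun_n {n : ℕ} (hn : 2 ≤ n) (eA : Fin n ≃ A) :
    cFun hn eA (n : ZMod (n+1)) = cFun hn eA 0 := by
  have hvn : ((n : ZMod (n+1))).val = n := ZMod.val_cast_of_lt (by omega)
  have hv0 : ((0 : ZMod (n+1))).val = 0 := ZMod.val_zero
  simp only [cFun, hvn, hv0]
  rw [dif_neg (by omega), dif_pos (by omega)]


/-- shift permutation on `A × ZMod (n+1)` -/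
def gPerm (A : Type*) (n : ℕ) : Equiv.Perm (A × ZMod (n+1)) where
  toFun x := (x.1, x.2 + 1)
  invFun x := (x.1, x.2 - 1)
  left_inv x := by simp
  right_inv x := by simp

/-- twisted translation permutation on `A × ZMod (n+1)` -/
def hPerm {n : ℕ} (hn : 2 ≤ n) (eA : Fin n ≃ A) : Equiv.Perm (A × ZMod (n+1)) where
  toFun x := (x.1 * cFun hn eA x.2, x.2)
  invFun x := (x.1 * (cFun hn eA x.2)⁻¹, x.2)
  left_inv x := by simp [mul_assoc]
  right_inv x := by simp [mul_assoc]

lemma gPerm_pow (k : ℕ) (x : A × ZMod (n+1)) :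
    ((gPerm A n) ^ k) x = (x.1, x.2 + k) := by
  induction k with
  | zero => simp
  | succ k ih =>
    rw [pow_succ', Equiv.Perm.mul_apply, ih]
    show ((x.1, x.2 + k).1, ((x.1, (x.2 + k : ZMod (n+1))).2) + 1) = _
    push_cast
    rw [add_assoc]

lemma gPerm_pow_inv (k : ℕ) (x : A × ZMod (n+1)) :
    (((gPerm A n) ^ k)⁻¹) x = (x.1, x.2 - k) := by
  rw [Equiv.Perm.inv_eq_iff_eq, gPerm_pow]
  simp

lemma hPerm_apply {n : ℕ} (hn : 2 ≤ n) (eA : Fin n ≃ A) (x : A × ZMod (n+1)) :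
    hPerm hn eA x = (x.1 * cFun hn eA x.2, x.2) := rfl

lemma hPerm_inv_apply {n : ℕ} (hn : 2 ≤ n) (eA : Fin n ≃ A) (x : A × ZMod (n+1)) :
    (hPerm hn eA)⁻¹ x = (x.1 * (cFun hn eA x.2)⁻¹, x.2) := rfl

/-- the test permutation `p = h g^{-n} h⁻¹ g^n` -/
lemma pPerm_apply {n : ℕ} (hn : 2 ≤ n) (eA : Fin n ≃ A) (x : A × ZMod (n+1)) :
    (hPerm hn eA * ((gPerm A n) ^ n)⁻¹ * (hPerm hn eA)⁻¹ * (gPerm A n) ^ n) x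
      = (x.1 * (cFun hn eA (x.2 + n))⁻¹ * cFun hn eA x.2, x.2) := by
  simp only [Equiv.Perm.mul_apply, gPerm_pow, gPerm_pow_inv, hPerm_apply, hPerm_inv_apply]
  simp

/-- the conjugated twist `q_s = g^{-s} h g^s` -/
lemma qPerm_apply {n : ℕ} (hn : 2 ≤ n) (eA : Fin n ≃ A) (s : ℕ) (x : A × ZMod (n+1)) :
    (((gPerm A n) ^ s)⁻¹ * hPerm hn eA * (gPerm A n) ^ s) x
      = (x.1 * cFun hn eA (x.2 + s), x.2) := by
  simp only [Equiv.Perm.mul_apply, gPerm_pow, gPerm_pow_inv, hPerm_apply]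
  simp


lemma cFun_coe {n : ℕ} (hn : 2 ≤ n) (eA : Fin n ≃ A) (k : Fin n) :
    cFun hn eA (((k : ℕ) : ZMod (n+1))) = eA k := by
  have hval : ((((k : ℕ)) : ZMod (n+1))).val = (k : ℕ) := ZMod.val_cast_of_lt (by omega)
  rw [cFun, dif_pos (by rw [hval]; exact k.isLt)]
  congr 1
  exact Fin.ext hval

/-- permutations of the form `(a, i) ↦ (a * v i, i + k)` -/
def wreathSub (A : Type*) [Group A] (n : ℕ) : Subgroup (Equiv.Perm (A × ZMod (n+1))) where
  carrier := {p | ∃ v : ZMod (n+1) → A, ∃ k : ZMod (n+1),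
    ∀ x : A × ZMod (n+1), p x = (x.1 * v x.2, x.2 + k)}
  one_mem' := ⟨fun _ => 1, 0, fun x => by simp⟩
  mul_mem' := by
    rintro p q ⟨v, k, hv⟩ ⟨u, l, hu⟩
    refine ⟨fun i => u i * v (i + l), l + k, fun x => ?_⟩
    rw [Equiv.Perm.mul_apply, hu, hv]
    simp [mul_assoc, add_assoc]
  inv_mem' := by
    rintro p ⟨v, k, hv⟩
    refine ⟨fun i => (v (i - k))⁻¹, -k, fun x => ?_⟩
    rw [Equiv.Perm.inv_eq_iff_eq, hv]
    simp [mul_assoc, sub_eq_add_neg]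

lemma gPerm_mem_wreathSub : gPerm A n ∈ wreathSub A n :=
  ⟨fun _ => 1, 1, fun x => by rw [mul_one]; rfl⟩

lemma hPerm_mem_wreathSub {n : ℕ} (hn : 2 ≤ n) (eA : Fin n ≃ A) :
    hPerm hn eA ∈ wreathSub A n :=
  ⟨cFun hn eA, 0, fun x => by rw [add_zero]; rfl⟩

lemma one_mem_wreathSub : (1 : Equiv.Perm (A × ZMod (n+1))) ∈ wreathSub A n :=
  (wreathSub A n).one_mem


theorem main {A : Type*} [Group A] {n : ℕ} (hn : 2 ≤ n) (eA : Fin n ≃ A)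
    {Γ : Type*} [Group Γ] (ψ : Γ →* Equiv.Perm (A × ZMod (n+1)))
    (hwr : ∀ γ : Γ, ψ γ ∈ wreathSub A n)
    (hg : ∃ γ, ψ γ = gPerm A n) (hh : ∃ γ, ψ γ = hPerm hn eA) :
    ∃ M : Subgroup Γ, M.index ≠ 0 ∧
      Nonempty (((Subgroup.normalizer (M : Set Γ)) ⧸ M.subgroupOf (Subgroup.normalizer (M : Set Γ))) ≃* A) := by
  classical
  haveI : Fintype A := Fintype.ofEquiv _ eA
  obtain ⟨ga, hga⟩ := hg
  obtain ⟨gb, hgb⟩ := hh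
  set S₀ : Subgroup (Equiv.Perm (A × ZMod (n+1))) :=
    { carrier := {p | p ((1 : A), (0 : ZMod (n+1))) = ((1 : A), (0 : ZMod (n+1)))}
      one_mem' := rfl
      mul_mem' := by
        intro p q hp hq
        simp only [Set.mem_setOf_eq] at *
        rw [Equiv.Perm.mul_apply, hq, hp]
      inv_mem' := by
        intro p hp
        simp only [Set.mem_setOf_eq] at *
        rw [Equiv.Perm.inv_eq_iff_eq, hp] } with hS₀def
  set M : Subgroup Γ := S₀.comap ψ with hMdef
  have hmem : ∀ γ : Γ, γ ∈ M ↔ ψ γ ((1 : A), (0 : ZMod (n+1))) = ((1 : A), (0 : ZMod (n+1))) :=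
    fun γ => Iff.rfl
  have hidx : M.index ≠ 0 := by
    rw [hMdef, Subgroup.index_comap]
    exact Subgroup.index_ne_zero_of_finite
  -- the special element δp = gb (ga^n)⁻¹ gb⁻¹ ga^n
  set δp : Γ := gb * (ga ^ n)⁻¹ * gb⁻¹ * ga ^ n with hδpdef
  have hψδp : ∀ x : A × ZMod (n+1),
      ψ δp x = (x.1 * (cFun hn eA (x.2 + n))⁻¹ * cFun hn eA x.2, x.2) := by
    intro x
    simp only [hδpdef, map_mul, map_inv, map_pow, hga, hgb]
    exact pPerm_apply hn eA x
  have hδpM : δp ∈ M := by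
    rw [hmem, hψδp]
    show ((1:A) * (cFun hn eA ((0:ZMod (n+1)) + n))⁻¹ * cFun hn eA 0, (0:ZMod (n+1))) = _
    rw [zero_add, cFun_n hn eA]
    simp
  clear_value δp
  -- second coordinate of normalizer elements
  have hsnd : ∀ γ : Γ, γ ∈ (Subgroup.normalizer (M : Set Γ)) → (ψ γ ((1 : A), (0 : ZMod (n+1)))).2 = 0 := by
    intro γ hγ
    by_contra hj
    have hδ' : γ⁻¹ * δp * γ ∈ M := (Subgroup.mem_normalizer_iff''.mp hγ δp).mp hδpM
    have hfix : ψ δp (ψ γ ((1 : A), (0 : ZMod (n+1)))) = ψ γ ((1 : A), (0 : ZMod (n+1))) := by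
      have e1 : δp * γ = γ * (γ⁻¹ * δp * γ) := by group
      calc ψ δp (ψ γ ((1 : A), (0 : ZMod (n+1))))
          = ψ (δp * γ) ((1 : A), (0 : ZMod (n+1))) := by rw [map_mul, Equiv.Perm.mul_apply]
        _ = ψ γ (ψ (γ⁻¹ * δp * γ) ((1 : A), (0 : ZMod (n+1)))) := by
            rw [e1, map_mul, Equiv.Perm.mul_apply]
        _ = ψ γ ((1 : A), (0 : ZMod (n+1))) := by rw [(hmem _).mp hδ']
    rw [hψδp] at hfix
    have h2 := (Prod.ext_iff.mp hfix).1
    rw [mul_assoc] at h2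
    have h3 : (cFun hn eA ((ψ γ ((1 : A), (0 : ZMod (n+1)))).2 + n))⁻¹
        * cFun hn eA (ψ γ ((1 : A), (0 : ZMod (n+1)))).2 = 1 :=
      mul_left_cancel (a := (ψ γ ((1 : A), (0 : ZMod (n+1)))).1) (by rw [mul_one]; exact h2)
    exact cFun_key2 hn eA _ hj (inv_mul_eq_one.mp h3)
  -- normalizer elements act on the 0-fiber by right translation
  have hwr0 : ∀ γ : Γ, γ ∈ (Subgroup.normalizer (M : Set Γ)) → ∀ y : A,
      ψ γ (y, (0 : ZMod (n+1))) = (y * (ψ γ ((1 : A), (0 : ZMod (n+1)))).1, 0) := by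
    intro γ hγ y
    obtain ⟨v, k, hv⟩ := hwr γ
    have hk : k = 0 := by
      have h0 := hsnd γ hγ
      rw [hv ((1 : A), (0 : ZMod (n+1)))] at h0
      simpa using h0
    have h1 : (ψ γ ((1 : A), (0 : ZMod (n+1)))).1 = v 0 := by
      rw [hv ((1 : A), (0 : ZMod (n+1)))]
      simp
    rw [hv (y, 0), hk, h1]
    simp
  -- the homomorphism from the normalizer to A
  set Θ : (Subgroup.normalizer (M : Set Γ)) →* A :=
    { toFun := fun γ => ((ψ (γ : Γ) ((1 : A), (0 : ZMod (n+1)))).1)⁻¹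
      map_one' := by simp
      map_mul' := by
        intro γ δ
        have hδx : ψ (δ : Γ) ((1 : A), (0 : ZMod (n+1)))
            = ((ψ (δ : Γ) ((1 : A), (0 : ZMod (n+1)))).1, 0) := by
          rw [Prod.ext_iff]
          exact ⟨rfl, hsnd _ δ.2⟩
        show ((ψ ((γ : Γ) * (δ : Γ)) ((1 : A), (0 : ZMod (n+1)))).1)⁻¹ = _ * _
        rw [map_mul, Equiv.Perm.mul_apply, hδx, hwr0 _ γ.2]
        simp [mul_inv_rev] } with hΘdef
  have hker : Θ.ker = M.subgroupOf (Subgroup.normalizer (M : Set Γ)) := by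
    ext γ
    rw [MonoidHom.mem_ker, Subgroup.mem_subgroupOf, hΘdef]
    simp only [MonoidHom.coe_mk, OneHom.coe_mk]
    rw [inv_eq_one]
    constructor
    · intro h1
      rw [hmem, Prod.ext_iff]
      exact ⟨h1, hsnd _ γ.2⟩
    · intro h1
      rw [hmem] at h1
      rw [h1]
  have hsurj : Function.Surjective Θ := by
    intro x
    set sv : ℕ := ((eA.symm x⁻¹ : Fin n) : ℕ) with hsvdef
    have hsvlt : sv < n := (eA.symm x⁻¹).isLt
    have hcs : cFun hn eA ((sv : ZMod (n+1))) = x⁻¹ := by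
      rw [hsvdef, cFun_coe hn eA, Equiv.apply_symm_apply]
    set γ0 : Γ := (ga ^ sv)⁻¹ * gb * ga ^ sv with hγ0def
    have hψγ0 : ∀ y : A × ZMod (n+1), ψ γ0 y = (y.1 * cFun hn eA (y.2 + sv), y.2) := by
      intro y
      simp only [hγ0def, map_mul, map_inv, map_pow, hga, hgb]
      exact qPerm_apply hn eA sv y
    clear_value γ0
    have hc0 : cFun hn eA ((0 : ZMod (n+1)) + sv) = x⁻¹ := by rw [zero_add, hcs]
    have hγ0inv : ψ γ0⁻¹ ((1 : A), (0 : ZMod (n+1))) = (x, 0) := by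
      rw [map_inv, Equiv.Perm.inv_eq_iff_eq, hψγ0]
      show ((1 : A), (0 : ZMod (n+1))) = ((x, (0:ZMod (n+1))).1 * cFun hn eA ((x, (0:ZMod (n+1))).2 + sv), (x, (0:ZMod (n+1))).2)
      rw [hc0]
      simp
    have hγ0N : γ0 ∈ (Subgroup.normalizer (M : Set Γ)) := by
      rw [Subgroup.mem_normalizer_iff]
      intro δ
      obtain ⟨u, l, hu⟩ := hwr δ
      have key : ∀ y : A, (ψ δ (y, (0 : ZMod (n+1))) = (y, 0)) ↔ (u 0 = 1 ∧ l = 0) := by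
        intro y
        rw [hu (y, 0), Prod.ext_iff]
        constructor
        · rintro ⟨h1, h2⟩
          refine ⟨mul_left_cancel (a := y) (by rw [mul_one]; exact h1), by simpa using h2⟩
        · rintro ⟨h1, h2⟩
          constructor
          · show y * u 0 = y
            rw [h1, mul_one]
          · show (0 : ZMod (n+1)) + l = 0
            rw [h2, add_zero]
      have hcomp : ∀ δ' : Γ, ψ (γ0 * δ' * γ0⁻¹) ((1 : A), (0 : ZMod (n+1)))
          = ψ γ0 (ψ δ' (ψ γ0⁻¹ ((1 : A), (0 : ZMod (n+1))))) := by
        intro δ'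
        rw [map_mul, map_mul, Equiv.Perm.mul_apply, Equiv.Perm.mul_apply]
      have hγ0x : ψ γ0 (x, (0 : ZMod (n+1))) = ((1 : A), (0 : ZMod (n+1))) := by
        rw [hψγ0]
        show ((x * cFun hn eA ((0 : ZMod (n+1)) + sv), (0 : ZMod (n+1)))) = _
        rw [hc0]
        simp
      constructor
      · intro hδM
        rw [hmem] at hδM ⊢
        rw [hcomp, hγ0inv, (key x).mpr ((key 1).mp hδM), hγ0x]
      · intro hδM
        rw [hmem] at hδM ⊢
        rw [hcomp, hγ0inv] at hδM
        have h7 : ψ δ (x, (0:ZMod (n+1))) = (x, 0) := by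
          apply (Equiv.injective (ψ γ0))
          rw [hδM, hγ0x]
        exact (key 1).mpr ((key x).mp h7)
    refine ⟨⟨γ0, hγ0N⟩, ?_⟩
    rw [hΘdef]
    show ((ψ γ0 ((1 : A), (0 : ZMod (n+1)))).1)⁻¹ = x
    rw [hψγ0]
    show ((1 : A) * cFun hn eA ((0 : ZMod (n+1)) + sv))⁻¹ = x
    rw [hc0, one_mul, inv_inv]
  refine ⟨M, hidx, ?_⟩
  exact ⟨(QuotientGroup.quotientMulEquivOfEq hker.symm).trans
    (QuotientGroup.quotientKerEquivOfSurjective Θ hsurj)⟩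
end FarpAux

/-- A group with an epimorphism onto a non-abelian free group has the finite
automorphism realisation property. -/
theorem farp_of_free_quotient
    {Γ : Type*} [Group Γ] {ι : Type*} (a b : ι) (hab : a ≠ b)
    (φ : Γ →* FreeGroup ι) (hφ : Function.Surjective φ) :
    ∀ (A : Type*) [Group A] [Finite A], ∃ M : Subgroup Γ, M.index ≠ 0 ∧
      Nonempty ((Subgroup.normalizer (M : Set Γ) ⧸ M.subgroupOf (Subgroup.normalizer (M : Set Γ))) ≃* A) := by
  intro A _ _
  rcases subsingleton_or_nontrivial A with hA | hA
  · refine ⟨⊤, by simp [Subgroup.index_top], ⟨?_⟩⟩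
    have h1 : ∀ q : (Subgroup.normalizer ((⊤ : Subgroup Γ) : Set Γ)) ⧸
        (⊤ : Subgroup Γ).subgroupOf (Subgroup.normalizer ((⊤ : Subgroup Γ) : Set Γ)), q = 1 := by
      intro q
      refine QuotientGroup.induction_on q ?_
      intro γ
      exact (QuotientGroup.eq_one_iff γ).mpr (Subgroup.mem_subgroupOf.mpr (Subgroup.mem_top _))
    exact { toFun := fun _ => 1
            invFun := fun _ => 1
            left_inv := fun q => by rw [h1 q]
            right_inv := fun y => Subsingleton.elim _ _
            map_mul' := fun _ _ => (one_mul 1).symm }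
  · classical
    haveI : Fintype A := Fintype.ofFinite A
    have hn : 2 ≤ Fintype.card A := Fintype.one_lt_card
    set eA : Fin (Fintype.card A) ≃ A := (Fintype.equivFin A).symm with heA
    set f : ι → Equiv.Perm (A × ZMod (Fintype.card A + 1)) :=
      fun i => if i = a then FarpAux.gPerm A (Fintype.card A)
        else if i = b then FarpAux.hPerm hn eA else 1 with hf
    set ψ : Γ →* Equiv.Perm (A × ZMod (Fintype.card A + 1)) := (FreeGroup.lift f).comp φ with hψ
    have hfmem : ∀ i, f i ∈ FarpAux.wreathSub A (Fintype.card A) := by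
      intro i
      rw [hf]
      dsimp only
      split_ifs
      · exact FarpAux.gPerm_mem_wreathSub
      · exact FarpAux.hPerm_mem_wreathSub hn eA
      · exact Subgroup.one_mem _
    have hwr : ∀ γ : Γ, ψ γ ∈ FarpAux.wreathSub A (Fintype.card A) := by
      intro γ
      have hlift : ∀ w : FreeGroup ι,
          FreeGroup.lift f w ∈ FarpAux.wreathSub A (Fintype.card A) := by
        intro w
        induction w using FreeGroup.induction_on with
        | C1 => rw [map_one]; exact Subgroup.one_mem _
        | of x =>
          rw [FreeGroup.lift_apply_of]
          exact hfmem x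
        | inv_of x ih => rw [map_inv]; exact Subgroup.inv_mem _ ih
        | mul x y ihx ihy => rw [map_mul]; exact Subgroup.mul_mem _ ihx ihy
      exact hlift (φ γ)
    obtain ⟨ga, hga⟩ := hφ (FreeGroup.of a)
    obtain ⟨gb, hgb⟩ := hφ (FreeGroup.of b)
    refine FarpAux.main hn eA ψ hwr ⟨ga, ?_⟩ ⟨gb, ?_⟩
    · rw [hψ]
      simp [MonoidHom.comp_apply, hga, FreeGroup.lift_apply_of, hf]
    · rw [hψ]
      simp [MonoidHom.comp_apply, hgb, FreeGroup.lift_apply_of, hf, Ne.symm hab]
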